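/- Let γ be a connected graph with half-edges, 𝒱 ⊆ Ver with 𝒱 ≠ Ver, and C ∈ π₀(γ,𝒱). Then the number of crossing edges of C in γ plus the number of flags f ∈ F°_γ(𝒱) with ε(ϑ(f)) ∈ C is at least 2. -/

import Mathlib

/-- The set of edges of a graph with half-edges: unordered pairs `{f, ϑ f}`. -/
def edgeSet {F : Type*} (ϑ : F → F) : Set (Set F) :=
  {e | ∃ f, e = {f, ϑ f}}

/-- The edges both of whose flags have ε-image in `S`. -/
def edgesIn {V F : Type*} (ε : F → V) (ϑ : F → F) (S : Set V) : Set (Set F) :=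
  {e | ∃ f, e = {f, ϑ f} ∧ ε f ∈ S ∧ ε (ϑ f) ∈ S}

/-- One-step adjacency in the graph: `v` and `v'` are the two endpoints of an edge. -/
def Step {V F : Type*} (ε : F → V) (ϑ : F → F) (v v' : V) : Prop :=
  ∃ f, ε f = v ∧ ε (ϑ f) = v'

/-- The graph is connected: any two distinct vertices are joined by a chain of edges. -/
def IsConnectedGraph {V F : Type*} (ε : F → V) (ϑ : F → F) : Prop :=
  ∀ v v' : V, v ≠ v' → Relation.ReflTransGen (Step ε ϑ) v v'

/-- One-step adjacency within the induced subgraph on the vertex subset `S`. -/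
def StepIn {V F : Type*} (ε : F → V) (ϑ : F → F) (S : Set V) (v v' : V) : Prop :=
  v ∈ S ∧ v' ∈ S ∧ ∃ f, ε f = v ∧ ε (ϑ f) = v'

/-- The connected component of `v` in the induced subgraph on `S`. -/
def component {V F : Type*} (ε : F → V) (ϑ : F → F) (S : Set V) (v : V) : Set V :=
  {w | Relation.ReflTransGen (StepIn ε ϑ S) v w}

/-- `π₀(γ,S)`: the set of connected components of the induced subgraph on `S`. -/
def pi0 {V F : Type*} (ε : F → V) (ϑ : F → F) (S : Set V) : Set (Set V) :=
  {C | ∃ v ∈ S, C = component ε ϑ S v}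

/-- The crossing edges of a subset `C` of vertices: edges with exactly one flag
having ε-image in `C`. -/
def crossingEdges {V F : Type*} (ε : F → V) (ϑ : F → F) (C : Set V) : Set (Set F) :=
  {e | ∃ f, e = {f, ϑ f} ∧ ε f ∉ C ∧ ε (ϑ f) ∈ C}

/-- One-step adjacency in the graph obtained by deleting the two flags `f₀`, `ϑ f₀`. -/
def StepAvoid {V F : Type*} (ε : F → V) (ϑ : F → F) (f₀ : F) (v v' : V) : Prop :=
  ∃ g, g ≠ f₀ ∧ g ≠ ϑ f₀ ∧ ε g = v ∧ ε (ϑ g) = v'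

/-- The flag `f₀` disconnects `C` from the rest of the graph: after deleting the flags
`f₀` and `ϑ f₀`, there is no chain of edges from a vertex of `C` to a vertex outside `C`. -/
def Disconnects {V F : Type*} (ε : F → V) (ϑ : F → F) (C : Set V) (f₀ : F) : Prop :=
  ∀ v ∈ C, ∀ v' ∉ C, ¬ Relation.ReflTransGen (StepAvoid ε ϑ f₀) v v'

/-- `F°_γ(S)`: the flags `f` with `ε f ∉ S` that disconnect from the rest of the graph
the connected component of the induced subgraph on `S` containing `ε (ϑ f)`. -/
def Fcirc {V F : Type*} (ε : F → V) (ϑ : F → F) (S : Set V) : Set F :=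
  {f | ε f ∉ S ∧ ε (ϑ f) ∈ S ∧ Disconnects ε ϑ (component ε ϑ S (ε (ϑ f))) f}

/-- `F†_γ(S)`: the flags of `F°_γ(S)` whose associated component carries no marked label. -/
def Fdagger {V F L : Type*} (ε : F → V) (ϑ : F → F) (εS : L → V) (S : Set V) : Set F :=
  {f | f ∈ Fcirc ε ϑ S ∧ ∀ s : L, εS s ∉ component ε ϑ S (ε (ϑ f))}

/-- Along any chain from inside `C` to outside `C` there is a crossing step. -/
lemma exists_cross_step {V : Type*} (C : Set V) (R : V → V → Prop) {v u : V}
    (h : Relation.ReflTransGen R v u) (hv : v ∈ C) (hu : u ∉ C) :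
    ∃ a b, R a b ∧ a ∈ C ∧ b ∉ C := by
  induction h with
  | refl => exact absurd hv hu
  | @tail b c h₁ h₂ ih =>
    by_cases hb : b ∈ C
    · exact ⟨_, _, h₂, hb, hu⟩
    · exact ih hb

lemma stepIn_symm {V F : Type*} (ε : F → V) (ϑ : F → F) (hinv : Function.Involutive ϑ)
    (S : Set V) : Symmetric (StepIn ε ϑ S) := by
  rintro v v' ⟨h1, h2, f, hf1, hf2⟩
  exact ⟨h2, h1, ϑ f, hf2, by rw [hinv f]; exact hf1⟩

lemma component_subset {V F : Type*} (ε : F → V) (ϑ : F → F) (S : Set V) {v : V}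
    (hv : v ∈ S) : component ε ϑ S v ⊆ S := by
  intro w hw
  induction hw with
  | refl => exact hv
  | tail h₁ h₂ ih => exact h₂.2.1

lemma component_eq {V F : Type*} (ε : F → V) (ϑ : F → F) (hinv : Function.Involutive ϑ)
    (S : Set V) {v w : V} (hw : w ∈ component ε ϑ S v) :
    component ε ϑ S w = component ε ϑ S v := by
  have hsym : Symmetric (Relation.ReflTransGen (StepIn ε ϑ S)) := fun a b h => (@Relation.ReflTransGen.stdSymm _ _ ⟨stepIn_symm ε ϑ hinv S⟩).symm a b h
  ext x
  constructor
  · intro hx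
    exact Relation.ReflTransGen.trans hw hx
  · intro hx
    exact Relation.ReflTransGen.trans (hsym hw) hx


/-- For a connected graph with half-edges and a proper vertex subset `𝒱`,
the number of crossing edges of a connected component `C` of the induced subgraph on `𝒱`
plus the number of flags `f ∈ F°_γ(𝒱)` with `ε (ϑ f) ∈ C` is at least 2. -/

theorem stmt2 {V F : Type*} [Fintype V] [Fintype F]
    (ε : F → V) (ϑ : F → F) (hinv : Function.Involutive ϑ) (hfpf : ∀ f, ϑ f ≠ f)
    (hconn : IsConnectedGraph ε ϑ)
    (𝒱 : Set V) (h𝒱 : 𝒱 ≠ Set.univ)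
    (C : Set V) (hC : C ∈ pi0 ε ϑ 𝒱) :
    2 ≤ (crossingEdges ε ϑ C).ncard + {f : F | f ∈ Fcirc ε ϑ 𝒱 ∧ ε (ϑ f) ∈ C}.ncard := by
  classical
  obtain ⟨v, hvS, rfl⟩ := hC
  set C := component ε ϑ 𝒱 v with hCdef
  have hCsub : C ⊆ 𝒱 := component_subset ε ϑ 𝒱 hvS
  have hvC : v ∈ C := Relation.ReflTransGen.refl
  -- the set of "crossing flags", oriented with ε f outside C
  set G : Set F := {g | ε g ∉ C ∧ ε (ϑ g) ∈ C} with hGdef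
  -- the outer endpoint of a crossing flag is outside 𝒱
  have houter : ∀ g ∈ G, ε g ∉ 𝒱 := by
    rintro g ⟨hg1, hg2⟩ hg𝒱
    apply hg1
    have : Relation.ReflTransGen (StepIn ε ϑ 𝒱) (ε (ϑ g)) (ε g) :=
      Relation.ReflTransGen.single ⟨hCsub hg2, hg𝒱, ϑ g, rfl, by rw [hinv g]⟩
    exact Relation.ReflTransGen.trans hg2 this
  -- crossingEdges is the injective image of G
  have himg : crossingEdges ε ϑ C = (fun g => ({g, ϑ g} : Set F)) '' G := by
    ext e
    constructor
    · rintro ⟨f, rfl, hf1, hf2⟩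
      exact ⟨f, ⟨hf1, hf2⟩, rfl⟩
    · rintro ⟨g, ⟨hg1, hg2⟩, rfl⟩
      exact ⟨g, rfl, hg1, hg2⟩
  have hinj : Set.InjOn (fun g => ({g, ϑ g} : Set F)) G := by
    rintro g₁ ⟨hg₁, hg₁'⟩ g₂ ⟨hg₂, hg₂'⟩ he
    have h' : ({g₁, ϑ g₁} : Set F) = {g₂, ϑ g₂} := he
    have : g₁ ∈ ({g₂, ϑ g₂} : Set F) := by
      rw [← h']; exact Set.mem_insert _ _
    rcases this with h | h
    · exact h
    · exfalso; apply hg₁; rw [h]; exact hg₂'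
  have hacard : (crossingEdges ε ϑ C).ncard = G.ncard := by
    rw [himg, Set.ncard_image_of_injOn hinj]
  -- G is nonempty
  obtain ⟨u, hu𝒱⟩ : ∃ u, u ∉ 𝒱 := by
    by_contra h
    push_neg at h
    exact h𝒱 (Set.eq_univ_of_forall h)
  have huC : u ∉ C := fun h => hu𝒱 (hCsub h)
  have hvu : v ≠ u := fun h => hu𝒱 (h ▸ hvS)
  obtain ⟨a, b, ⟨f, hfa, hfb⟩, haC, hbC⟩ :=
    exists_cross_step C (Step ε ϑ) (hconn v u hvu) hvC huC
  have hg₀ : ϑ f ∈ G := ⟨by rw [hfb]; exact hbC, by rw [hinv f, hfa]; exact haC⟩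
  set g₀ := ϑ f with hg₀def
  by_cases hex : ∃ g ∈ G, g ≠ g₀
  · -- two crossing flags, hence two crossing edges
    obtain ⟨g₁, hg₁, hne⟩ := hex
    have hsub : ({g₀, g₁} : Set F) ⊆ G := by
      rintro x (rfl | rfl) <;> assumption
    have h2 : 2 ≤ G.ncard := by
      have := Set.ncard_le_ncard hsub G.toFinite
      rwa [Set.ncard_pair (Ne.symm hne)] at this
    rw [hacard]
    exact le_trans h2 (Nat.le_add_right _ _)
  · -- G = {g₀}: show g₀ ∈ Fcirc with ε (ϑ g₀) ∈ C
    push_neg at hex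
    have hcomp : component ε ϑ 𝒱 (ε (ϑ g₀)) = C := component_eq ε ϑ hinv 𝒱 hg₀.2
    have hdis : Disconnects ε ϑ (component ε ϑ 𝒱 (ε (ϑ g₀))) g₀ := by
      rw [hcomp]
      intro x hx y hy hchain
      obtain ⟨a', b', ⟨g, hgne1, hgne2, hga, hgb⟩, haC', hbC'⟩ :=
        exists_cross_step C (StepAvoid ε ϑ g₀) hchain hx hy
      have : ϑ g ∈ G := ⟨by rw [hgb]; exact hbC', by rw [hinv g, hga]; exact haC'⟩
      have := hex _ this
      apply hgne2
      rw [← hinv g, this]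
    have hmem : g₀ ∈ {f : F | f ∈ Fcirc ε ϑ 𝒱 ∧ ε (ϑ f) ∈ C} :=
      ⟨⟨houter _ hg₀, hCsub hg₀.2, hdis⟩, hg₀.2⟩
    have hb1 : 1 ≤ {f : F | f ∈ Fcirc ε ϑ 𝒱 ∧ ε (ϑ f) ∈ C}.ncard := by
      rw [Nat.one_le_iff_ne_zero]
      intro h
      rw [Set.ncard_eq_zero (Set.toFinite _)] at h
      rw [h] at hmem
      exact hmem
    have ha1 : 1 ≤ G.ncard := by
      rw [Nat.one_le_iff_ne_zero]
      intro h
      rw [Set.ncard_eq_zero (Set.toFinite _)] at h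
      rw [h] at hg₀
      exact hg₀
    rw [hacard]
    omega
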